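/- For each eigenvalue λ_i of L_N (equivalently, each zero λ_i of φ), the vector ψ^{(i)} ∈ ℝ^N with components ψ^{(i)}_j := x_j/(x_j − λ_i), j = 1, …, N, is a nonzero eigenvector of L_N with eigenvalue λ_i, i.e. L_N ψ^{(i)} = λ_i ψ^{(i)}. -/

import Mathlib

/-- For each eigenvalue `lam` of the trap-model generator `L` (equivalently,
each zero of `φ`, i.e. each real number `lam` outside `{x j}` with `∑ j, lam/(x j - lam) = 0`),
the vector `ψ` with components `ψ j = x j / (x j - lam)` is a nonzero eigenvector of `L` with
eigenvalue `lam`, i.e. `L ψ = lam • ψ`. -/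
theorem rem_trap_eigenvector_formula
    (N : ℕ) (hN : 2 ≤ N) (x : Fin N → ℝ)
    (hx_pos : ∀ i, 0 < x i) (hx_inj : Function.Injective x)
    (L : Matrix (Fin N) (Fin N) ℝ)
    (hL : ∀ i j, L i j = if i = j then ((N - 1 : ℝ) / N) * x i else -(x i) / N)
    (lam : ℝ) (hlam_ne : ∀ j, x j ≠ lam)
    (hlam_zero : ∑ j : Fin N, lam / (x j - lam) = 0)
    (ψ : Fin N → ℝ) (hψ : ∀ j, ψ j = x j / (x j - lam)) :
    L.mulVec ψ = lam • ψ ∧ ψ ≠ 0 := by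
  have hNpos : (0 : ℝ) < N := by positivity
  have hNne : (N : ℝ) ≠ 0 := ne_of_gt hNpos
  have hden : ∀ j, x j - lam ≠ 0 := fun j => sub_ne_zero.mpr (hlam_ne j)
  have hsum : ∑ j, ψ j = N := by
    have : ∀ j, ψ j = 1 + lam / (x j - lam) := by
      intro j; rw [hψ j]; field_simp [hden j]; ring
    simp only [this, Finset.sum_add_distrib, hlam_zero, add_zero,
      Finset.sum_const, Finset.card_univ, Fintype.card_fin, nsmul_eq_mul, mul_one]
  constructor
  · funext i
    have hsplit : ∑ j, L i j * ψ j
        = ((N - 1 : ℝ) / N) * x i * ψ i + ∑ j ∈ Finset.univ.erase i, (-(x i) / N) * ψ j := by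
      rw [← Finset.add_sum_erase _ _ (Finset.mem_univ i)]
      congr 1
      · rw [hL i i, if_pos rfl]
      · exact Finset.sum_congr rfl fun j hj => by
          rw [hL i j, if_neg (Ne.symm (Finset.ne_of_mem_erase hj))]
    have herase : ∑ j ∈ Finset.univ.erase i, ψ j = (N : ℝ) - ψ i := by
      have := Finset.add_sum_erase Finset.univ ψ (Finset.mem_univ i)
      rw [hsum] at this
      linarith
    have : (L.mulVec ψ) i = x i * ψ i - x i := by
      simp only [Matrix.mulVec, dotProduct]
      rw [hsplit, ← Finset.mul_sum, herase]
      field_simp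
      ring
    rw [this, Pi.smul_apply, smul_eq_mul, hψ i]
    field_simp [hden i]
    ring
  · intro h
    have h0 : ψ ⟨0, by omega⟩ = 0 := congrFun h _
    rw [hψ] at h0
    exact (hx_pos _).ne' (by
      rcases div_eq_zero_iff.mp h0 with h | h
      · exact h
      · exact absurd h (hden _))
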